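/- If F₁ and F₂ are hyperbolic hyperfields, then F₁ ×ₕ F₂ := (Ḟ₁ × Ḟ₂) ∪ {(0,0)}, with componentwise product and negation, and multivalued sum (a,b)+(c,d) = {(e,f) ∈ F₁ ×ₕ F₂ : e ∈ a+c and f ∈ b+d}, is a hyperbolic hyperfield. -/

import Mathlib

/-- A multiring structure (multivalued addition) on a carrier `R`. -/
structure MulRingOps (R : Type*) where
  add : R → R → Set R
  mul : R → R → R
  neg : R → R
  zero : R
  one : R

namespace MulRingOps

variable {R : Type*}

/-- The multiring axioms. -/
structure IsMulRing (S : MulRingOps R) : Prop where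
  add_nonempty : ∀ a b, (S.add a b).Nonempty
  add_comm : ∀ a b, S.add a b = S.add b a
  rev_left : ∀ {x y z}, z ∈ S.add x y → x ∈ S.add z (S.neg y)
  rev_right : ∀ {x y z}, z ∈ S.add x y → y ∈ S.add (S.neg x) z
  zero_add : ∀ x y, y ∈ S.add S.zero x ↔ x = y
  add_assoc : ∀ x y z : R,
    (⋃ w ∈ S.add y z, S.add x w) = (⋃ t ∈ S.add x y, S.add t z)
  mul_comm : ∀ a b, S.mul a b = S.mul b a
  mul_assoc : ∀ a b c, S.mul (S.mul a b) c = S.mul a (S.mul b c)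
  one_mul : ∀ a, S.mul S.one a = a
  mul_zero : ∀ a, S.mul a S.zero = S.zero
  distrib : ∀ {a b c : R} (d : R), c ∈ S.add a b →
    S.mul c d ∈ S.add (S.mul a d) (S.mul b d)

/-- A hyperfield: a multiring with `0 ≠ 1` in which every nonzero element is invertible. -/
structure IsHyperfield (S : MulRingOps R) extends IsMulRing S : Prop where
  zero_ne_one : S.zero ≠ S.one
  exists_inv : ∀ a, a ≠ S.zero → ∃ b, S.mul a b = S.one

/-- A hyperfield is hyperbolic when `1 - 1` is everything. -/
def IsHyperbolic (S : MulRingOps R) : Prop :=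
  S.add S.one (S.neg S.one) = Set.univ

/-- Morphisms of multirings. -/
def IsHom {A B : Type*} (S : MulRingOps A) (T : MulRingOps B) (f : A → B) : Prop :=
  (∀ {a b c}, c ∈ S.add a b → f c ∈ T.add (f a) (f b)) ∧
  (∀ a, f (S.neg a) = T.neg (f a)) ∧
  f S.zero = T.zero ∧
  (∀ a b, f (S.mul a b) = T.mul (f a) (f b)) ∧
  f S.one = T.one

end MulRingOps
namespace MulRingOps

variable {A B : Type*}

lemma IsMulRing.neg_zero' {S : MulRingOps A} (h : S.IsMulRing) : S.neg S.zero = S.zero := by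
  have h0 : S.zero ∈ S.add S.zero S.zero := (h.zero_add _ _).mpr rfl
  have h1 := h.rev_right h0
  rw [h.add_comm] at h1
  exact (h.zero_add _ _).mp h1

lemma IsMulRing.neg_neg' {S : MulRingOps A} (h : S.IsMulRing) (a : A) :
    S.neg (S.neg a) = a := by
  have h0 : a ∈ S.add S.zero a := (h.zero_add _ _).mpr rfl
  have h1 : S.zero ∈ S.add a (S.neg a) := h.rev_left h0
  have h2 : a ∈ S.add S.zero (S.neg (S.neg a)) := h.rev_left h1
  exact (h.zero_add _ _).mp h2

lemma IsMulRing.neg_ne_zero' {S : MulRingOps A} (h : S.IsMulRing) {a : A}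
    (ha : a ≠ S.zero) : S.neg a ≠ S.zero := by
  intro hcon
  apply ha
  rw [← h.neg_neg' a, hcon, h.neg_zero']

lemma IsHyperfield.mul_ne_zero' {S : MulRingOps A} (h : S.IsHyperfield) {a b : A}
    (ha : a ≠ S.zero) (hb : b ≠ S.zero) : S.mul a b ≠ S.zero := by
  intro hcon
  obtain ⟨a', ha'⟩ := h.exists_inv a ha
  apply hb
  calc b = S.mul S.one b := (h.one_mul b).symm
    _ = S.mul (S.mul a a') b := by rw [ha']
    _ = S.mul (S.mul a' a) b := by rw [h.mul_comm a a']
    _ = S.mul a' (S.mul a b) := h.mul_assoc _ _ _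
    _ = S.zero := by rw [hcon, h.mul_zero]

/-- The carrier `F₁ ×ₕ F₂ = (Ḟ₁ × Ḟ₂) ∪ {(0,0)}`, with `none` playing the role of `(0,0)`. -/
abbrev PCar (S : MulRingOps A) (T : MulRingOps B) :=
  Option ({a : A // a ≠ S.zero} × {b : B // b ≠ T.zero})

/-- First coordinate of an element of `F₁ ×ₕ F₂`. -/
def pFst (S : MulRingOps A) (T : MulRingOps B) : PCar S T → A
  | none => S.zero
  | some p => p.1.1

/-- Second coordinate of an element of `F₁ ×ₕ F₂`. -/
def pSnd (S : MulRingOps A) (T : MulRingOps B) : PCar S T → B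
  | none => T.zero
  | some p => p.2.1

/-- The multivalued sum on `F₁ ×ₕ F₂`:
`(a,b)+(c,d) = {(e,f) ∈ F₁ ×ₕ F₂ : e ∈ a+c and f ∈ b+d}`. -/
def prodAdd (S : MulRingOps A) (T : MulRingOps B) (x y : PCar S T) : Set (PCar S T) :=
  {z | pFst S T z ∈ S.add (pFst S T x) (pFst S T y) ∧
       pSnd S T z ∈ T.add (pSnd S T x) (pSnd S T y)}

/-- The hyperfield operations on `F₁ ×ₕ F₂`: componentwise product and negation,
and the multivalued sum `prodAdd`. -/
def prodOps {S : MulRingOps A} {T : MulRingOps B}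
    (hS : S.IsHyperfield) (hT : T.IsHyperfield) : MulRingOps (PCar S T) where
  add := prodAdd S T
  mul x y :=
    match x, y with
    | some p, some q =>
        some (⟨S.mul p.1.1 q.1.1, hS.mul_ne_zero' p.1.2 q.1.2⟩,
              ⟨T.mul p.2.1 q.2.1, hT.mul_ne_zero' p.2.2 q.2.2⟩)
    | _, _ => none
  neg := Option.map fun p =>
    (⟨S.neg p.1.1, hS.toIsMulRing.neg_ne_zero' p.1.2⟩,
     ⟨T.neg p.2.1, hT.toIsMulRing.neg_ne_zero' p.2.2⟩)
  zero := none
  one := some (⟨S.one, Ne.symm hS.zero_ne_one⟩, ⟨T.one, Ne.symm hT.zero_ne_one⟩)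

/-! ### Auxiliary lemmas -/

lemma IsMulRing.mul_zero_left {S : MulRingOps A} (h : S.IsMulRing) (a : A) :
    S.mul S.zero a = S.zero := by rw [h.mul_comm, h.mul_zero]

lemma IsMulRing.mul_one_right {S : MulRingOps A} (h : S.IsMulRing) (a : A) :
    S.mul a S.one = a := by rw [h.mul_comm, h.one_mul]

lemma IsMulRing.eq_neg_of_zero_mem {S : MulRingOps A} (h : S.IsMulRing) {a b : A}
    (hab : S.zero ∈ S.add a b) : b = S.neg a := by
  have h1 := h.rev_right hab
  rw [h.add_comm] at h1
  exact ((h.zero_add _ _).mp h1).symm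

lemma IsMulRing.neg_one_mul' {S : MulRingOps A} (h : S.IsMulRing) (a : A) :
    S.mul (S.neg S.one) a = S.neg a := by
  have h1 : S.one ∈ S.add S.zero S.one := (h.zero_add _ _).mpr rfl
  have h0 : S.zero ∈ S.add S.one (S.neg S.one) := h.rev_left h1
  have h2 := h.distrib a h0
  rw [h.mul_comm S.zero a, h.mul_zero, h.one_mul] at h2
  exact h.eq_neg_of_zero_mem h2

lemma hyp_add_neg_self {S : MulRingOps A} (hS : S.IsHyperfield) (hSh : IsHyperbolic S)
    {a : A} (ha : a ≠ S.zero) : S.add a (S.neg a) = Set.univ := by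
  ext c
  simp only [Set.mem_univ, iff_true]
  obtain ⟨b, hb⟩ := hS.exists_inv a ha
  have hmem : S.mul c b ∈ S.add S.one (S.neg S.one) := by rw [hSh]; trivial
  have h2 := hS.distrib a hmem
  rw [hS.one_mul, hS.toIsMulRing.neg_one_mul'] at h2
  have hc : S.mul (S.mul c b) a = c := by
    rw [hS.mul_assoc, hS.mul_comm b a, hb, hS.toIsMulRing.mul_one_right]
  rwa [hc] at h2

lemma hyp_exists_nonzero_mem {S : MulRingOps A} (hS : S.IsHyperfield) (hSh : IsHyperbolic S)
    {a b : A} (hab : a ≠ S.zero ∨ b ≠ S.zero) : ∃ e ∈ S.add a b, e ≠ S.zero := by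
  by_cases hb : b = S.neg a
  · have ha : a ≠ S.zero := by
      rcases hab with h | h
      · exact h
      · intro h0; apply h; rw [hb, h0, hS.toIsMulRing.neg_zero']
    refine ⟨a, ?_, ha⟩
    rw [hb, hyp_add_neg_self hS hSh ha]; trivial
  · obtain ⟨e, he⟩ := hS.add_nonempty a b
    exact ⟨e, he, fun h0 => hb (hS.toIsMulRing.eq_neg_of_zero_mem (h0 ▸ he))⟩

lemma hyp_fix {S : MulRingOps A} (hS : S.IsHyperfield) (hSh : IsHyperbolic S)
    {x y z u : A} (hx : x ≠ S.zero) (huz : u ≠ S.zero ∨ z ≠ S.zero)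
    (h0 : S.zero ∈ S.add x y) :
    ∃ t, t ≠ S.zero ∧ t ∈ S.add x y ∧ u ∈ S.add t z := by
  have hy : y = S.neg x := hS.toIsMulRing.eq_neg_of_zero_mem h0
  have huniv : S.add x y = Set.univ := by rw [hy]; exact hyp_add_neg_self hS hSh hx
  have huz' : u ≠ S.zero ∨ S.neg z ≠ S.zero := by
    rcases huz with h | h
    · exact Or.inl h
    · exact Or.inr (hS.toIsMulRing.neg_ne_zero' h)
  obtain ⟨t, ht, htz⟩ := hyp_exists_nonzero_mem hS hSh huz'
  refine ⟨t, htz, by rw [huniv]; trivial, ?_⟩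
  have h2 := hS.rev_left ht
  rwa [hS.toIsMulRing.neg_neg'] at h2

lemma pFst_eq_zero {S : MulRingOps A} {T : MulRingOps B} {x : PCar S T}
    (h : pFst S T x = S.zero) : x = none := by
  cases x with
  | none => rfl
  | some p => exact absurd h p.1.2

lemma pSnd_eq_zero {S : MulRingOps A} {T : MulRingOps B} {x : PCar S T}
    (h : pSnd S T x = T.zero) : x = none := by
  cases x with
  | none => rfl
  | some p => exact absurd h p.2.2

lemma eq_of_coords {S : MulRingOps A} {T : MulRingOps B} {x y : PCar S T}
    (h1 : pFst S T x = pFst S T y) (h2 : pSnd S T x = pSnd S T y) : x = y := by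
  cases x with
  | none =>
    cases y with
    | none => rfl
    | some q => exact absurd h1.symm q.1.2
  | some p =>
    cases y with
    | none => exact absurd h1 p.1.2
    | some q =>
      exact congrArg some (Prod.ext (Subtype.ext h1) (Subtype.ext h2))

lemma pFst_neg {S : MulRingOps A} {T : MulRingOps B}
    (hS : S.IsHyperfield) (hT : T.IsHyperfield) (x : PCar S T) :
    pFst S T ((prodOps hS hT).neg x) = S.neg (pFst S T x) := by
  cases x with
  | none => exact (hS.toIsMulRing.neg_zero').symm
  | some p => rfl

lemma pSnd_neg {S : MulRingOps A} {T : MulRingOps B}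
    (hS : S.IsHyperfield) (hT : T.IsHyperfield) (x : PCar S T) :
    pSnd S T ((prodOps hS hT).neg x) = T.neg (pSnd S T x) := by
  cases x with
  | none => exact (hT.toIsMulRing.neg_zero').symm
  | some p => rfl

lemma pFst_mul {S : MulRingOps A} {T : MulRingOps B}
    (hS : S.IsHyperfield) (hT : T.IsHyperfield) (x y : PCar S T) :
    pFst S T ((prodOps hS hT).mul x y) = S.mul (pFst S T x) (pFst S T y) := by
  cases x with
  | none => cases y with
    | none => exact (hS.toIsMulRing.mul_zero_left _).symm
    | some q => exact (hS.toIsMulRing.mul_zero_left _).symm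
  | some p => cases y with
    | none => exact (hS.mul_zero _).symm
    | some q => rfl

lemma pSnd_mul {S : MulRingOps A} {T : MulRingOps B}
    (hS : S.IsHyperfield) (hT : T.IsHyperfield) (x y : PCar S T) :
    pSnd S T ((prodOps hS hT).mul x y) = T.mul (pSnd S T x) (pSnd S T y) := by
  cases x with
  | none => cases y with
    | none => exact (hT.toIsMulRing.mul_zero_left _).symm
    | some q => exact (hT.toIsMulRing.mul_zero_left _).symm
  | some p => cases y with
    | none => exact (hT.mul_zero _).symm
    | some q => rfl

lemma prodAdd_comm {S : MulRingOps A} {T : MulRingOps B}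
    (hS : S.IsMulRing) (hT : T.IsMulRing) (x y : PCar S T) :
    prodAdd S T x y = prodAdd S T y x := by
  unfold prodAdd
  rw [hS.add_comm (pFst S T x), hT.add_comm (pSnd S T x)]

lemma prod_assoc_key {S : MulRingOps A} {T : MulRingOps B}
    (hS : S.IsHyperfield) (hT : T.IsHyperfield)
    (hSh : IsHyperbolic S) (hTh : IsHyperbolic T)
    (x y z u : PCar S T)
    (h : u ∈ ⋃ w ∈ prodAdd S T y z, prodAdd S T x w) :
    u ∈ ⋃ t ∈ prodAdd S T x y, prodAdd S T t z := by
  simp only [Set.mem_iUnion, exists_prop] at h ⊢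
  obtain ⟨w, hw, hu⟩ := h
  obtain ⟨hw1, hw2⟩ := hw
  obtain ⟨hu1, hu2⟩ := hu
  have hA : pFst S T u ∈ ⋃ t ∈ S.add (pFst S T x) (pFst S T y), S.add t (pFst S T z) := by
    rw [← hS.add_assoc]
    exact Set.mem_biUnion hw1 hu1
  have hB : pSnd S T u ∈ ⋃ t ∈ T.add (pSnd S T x) (pSnd S T y), T.add t (pSnd S T z) := by
    rw [← hT.add_assoc]
    exact Set.mem_biUnion hw2 hu2
  simp only [Set.mem_iUnion, exists_prop] at hA hB
  obtain ⟨t1, ht1m, ht1u⟩ := hA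
  obtain ⟨t2, ht2m, ht2u⟩ := hB
  by_cases h1 : t1 = S.zero
  · by_cases h2 : t2 = T.zero
    · subst h1; subst h2
      exact ⟨none, ⟨ht1m, ht2m⟩, ht1u, ht2u⟩
    · -- t1 = 0, t2 ≠ 0 : fix the first coordinate
      have hx1 : pFst S T x ≠ S.zero := by
        intro hx0
        have hxn := pFst_eq_zero hx0
        have hy0 : pFst S T y = S.zero := by
          have hz0 : S.zero ∈ S.add (pFst S T x) (pFst S T y) := h1 ▸ ht1m
          rw [hx0] at hz0
          exact (hS.zero_add _ _).mp hz0
        have hyn := pFst_eq_zero hy0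
        subst hxn; subst hyn
        exact h2 ((hT.zero_add T.zero t2).mp ht2m).symm
      have huz1 : pFst S T u ≠ S.zero ∨ pFst S T z ≠ S.zero := by
        by_contra hc
        push_neg at hc
        obtain ⟨hu0, hz0⟩ := hc
        have hun := pFst_eq_zero hu0
        have hzn := pFst_eq_zero hz0
        subst hun; subst hzn
        rw [hT.add_comm] at ht2u
        exact h2 ((hT.zero_add t2 T.zero).mp ht2u)
      obtain ⟨t1', ht1'0, ht1'm, ht1'u⟩ := hyp_fix hS hSh hx1 huz1 (h1 ▸ ht1m)
      exact ⟨some (⟨t1', ht1'0⟩, ⟨t2, h2⟩), ⟨ht1'm, ht2m⟩, ht1'u, ht2u⟩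
  · by_cases h2 : t2 = T.zero
    · -- t1 ≠ 0, t2 = 0 : fix the second coordinate
      have hx2 : pSnd S T x ≠ T.zero := by
        intro hx0
        have hxn := pSnd_eq_zero hx0
        have hy0 : pSnd S T y = T.zero := by
          have hz0 : T.zero ∈ T.add (pSnd S T x) (pSnd S T y) := h2 ▸ ht2m
          rw [hx0] at hz0
          exact (hT.zero_add _ _).mp hz0
        have hyn := pSnd_eq_zero hy0
        subst hxn; subst hyn
        exact h1 ((hS.zero_add S.zero t1).mp ht1m).symm
      have huz2 : pSnd S T u ≠ T.zero ∨ pSnd S T z ≠ T.zero := by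
        by_contra hc
        push_neg at hc
        obtain ⟨hu0, hz0⟩ := hc
        have hun := pSnd_eq_zero hu0
        have hzn := pSnd_eq_zero hz0
        subst hun; subst hzn
        rw [hS.add_comm] at ht1u
        exact h1 ((hS.zero_add t1 S.zero).mp ht1u)
      obtain ⟨t2', ht2'0, ht2'm, ht2'u⟩ := hyp_fix hT hTh hx2 huz2 (h2 ▸ ht2m)
      exact ⟨some (⟨t1, h1⟩, ⟨t2', ht2'0⟩), ⟨ht1m, ht2'm⟩, ht1u, ht2'u⟩
    · exact ⟨some (⟨t1, h1⟩, ⟨t2, h2⟩), ⟨ht1m, ht2m⟩, ht1u, ht2u⟩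

end MulRingOps

open MulRingOps in
/-- if `F₁`, `F₂` are hyperbolic hyperfields then
`F₁ ×ₕ F₂ = (Ḟ₁ × Ḟ₂) ∪ {(0,0)}` with componentwise product and negation and the sum
`(a,b)+(c,d) = {(e,f) ∈ F₁ ×ₕ F₂ : e ∈ a+c, f ∈ b+d}` is a hyperbolic hyperfield. -/
theorem prod_isHyperbolicHyperfield {A B : Type*} {S : MulRingOps A} {T : MulRingOps B}
    (hS : S.IsHyperfield) (hT : T.IsHyperfield)
    (hSh : IsHyperbolic S) (hTh : IsHyperbolic T) :
    (prodOps hS hT).IsHyperfield ∧ IsHyperbolic (prodOps hS hT) := by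
  have hS' := hS.toIsMulRing
  have hT' := hT.toIsMulRing
  refine ⟨⟨⟨?_, ?_, ?_, ?_, ?_, ?_, ?_, ?_, ?_, ?_, ?_⟩, ?_, ?_⟩, ?_⟩
  · -- add_nonempty
    intro x y
    cases x with
    | none =>
      cases y with
      | none => exact ⟨none, (hS.zero_add _ _).mpr rfl, (hT.zero_add _ _).mpr rfl⟩
      | some q => exact ⟨some q, (hS.zero_add _ _).mpr rfl, (hT.zero_add _ _).mpr rfl⟩
    | some p =>
      cases y with
      | none =>
        refine ⟨some p, ?_, ?_⟩
        · show p.1.1 ∈ S.add p.1.1 S.zero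
          rw [hS.add_comm]; exact (hS.zero_add _ _).mpr rfl
        · show p.2.1 ∈ T.add p.2.1 T.zero
          rw [hT.add_comm]; exact (hT.zero_add _ _).mpr rfl
      | some q =>
        obtain ⟨e, he, he0⟩ := hyp_exists_nonzero_mem hS hSh (Or.inl p.1.2)
        obtain ⟨f, hf, hf0⟩ := hyp_exists_nonzero_mem hT hTh (Or.inl p.2.2)
        exact ⟨some (⟨e, he0⟩, ⟨f, hf0⟩), he, hf⟩
  · -- add_comm
    intro a b
    exact prodAdd_comm hS' hT' a b
  · -- rev_left
    intro x y z h
    refine ⟨?_, ?_⟩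
    · rw [pFst_neg hS hT]; exact hS.rev_left h.1
    · rw [pSnd_neg hS hT]; exact hT.rev_left h.2
  · -- rev_right
    intro x y z h
    refine ⟨?_, ?_⟩
    · rw [pFst_neg hS hT]; exact hS.rev_right h.1
    · rw [pSnd_neg hS hT]; exact hT.rev_right h.2
  · -- zero_add
    intro x y
    constructor
    · rintro ⟨h1, h2⟩
      exact eq_of_coords ((hS.zero_add _ _).mp h1) ((hT.zero_add _ _).mp h2)
    · rintro rfl
      exact ⟨(hS.zero_add _ _).mpr rfl, (hT.zero_add _ _).mpr rfl⟩
  · -- add_assoc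
    intro x y z
    ext u
    constructor
    · exact prod_assoc_key hS hT hSh hTh x y z u
    · intro h
      have e1 : (⋃ t ∈ prodAdd S T x y, prodAdd S T t z)
          = ⋃ t ∈ prodAdd S T y x, prodAdd S T z t := by
        rw [prodAdd_comm hS' hT' x y]
        exact Set.iUnion₂_congr fun t _ => prodAdd_comm hS' hT' t z
      have h' : u ∈ ⋃ w ∈ prodAdd S T y x, prodAdd S T z w := e1 ▸ h
      have h2 := prod_assoc_key hS hT hSh hTh z y x u h'
      have e2 : (⋃ t ∈ prodAdd S T z y, prodAdd S T t x)
          = ⋃ w ∈ prodAdd S T y z, prodAdd S T x w := by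
        rw [prodAdd_comm hS' hT' z y]
        exact Set.iUnion₂_congr fun t _ => prodAdd_comm hS' hT' t x
      exact e2 ▸ h2
  · -- mul_comm
    intro a b
    cases a with
    | none => cases b with
      | none => rfl
      | some q => rfl
    | some p => cases b with
      | none => rfl
      | some q =>
        exact congrArg some (Prod.ext (Subtype.ext (hS.mul_comm _ _))
          (Subtype.ext (hT.mul_comm _ _)))
  · -- mul_assoc
    intro a b c
    cases a with
    | none => rfl
    | some p => cases b with
      | none => rfl
      | some q => cases c with
        | none => rfl
        | some r =>
          exact congrArg some (Prod.ext (Subtype.ext (hS.mul_assoc _ _ _))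
            (Subtype.ext (hT.mul_assoc _ _ _)))
  · -- one_mul
    intro a
    cases a with
    | none => rfl
    | some p =>
      exact congrArg some (Prod.ext (Subtype.ext (hS.one_mul _))
        (Subtype.ext (hT.one_mul _)))
  · -- mul_zero
    intro a
    cases a with
    | none => rfl
    | some p => rfl
  · -- distrib
    intro a b c d h
    refine ⟨?_, ?_⟩
    · rw [pFst_mul hS hT, pFst_mul hS hT, pFst_mul hS hT]
      exact hS.distrib _ h.1
    · rw [pSnd_mul hS hT, pSnd_mul hS hT, pSnd_mul hS hT]
      exact hT.distrib _ h.2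
  · -- zero_ne_one
    exact fun h => Option.some_ne_none _ h.symm
  · -- exists_inv
    intro a ha
    cases a with
    | none => exact absurd rfl ha
    | some p =>
      obtain ⟨b1, hb1⟩ := hS.exists_inv p.1.1 p.1.2
      obtain ⟨b2, hb2⟩ := hT.exists_inv p.2.1 p.2.2
      have hb10 : b1 ≠ S.zero := by
        intro h0; rw [h0, hS.mul_zero] at hb1; exact hS.zero_ne_one hb1
      have hb20 : b2 ≠ T.zero := by
        intro h0; rw [h0, hT.mul_zero] at hb2; exact hT.zero_ne_one hb2
      exact ⟨some (⟨b1, hb10⟩, ⟨b2, hb20⟩),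
        congrArg some (Prod.ext (Subtype.ext hb1) (Subtype.ext hb2))⟩
  · -- hyperbolic
    ext u
    simp only [Set.mem_univ, iff_true]
    refine ⟨?_, ?_⟩
    · show pFst S T u ∈ S.add S.one (S.neg S.one)
      rw [hSh]; trivial
    · show pSnd S T u ∈ T.add T.one (T.neg T.one)
      rw [hTh]; trivial
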